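/- Let n ≥ 3 and let K₁, …, Kₙ be subgroups of a group G such that Kᵢ = K_{i+1} for some index 1 ≤ i < n. Then the n-fold Higgins commutator is contained in the (n−1)-fold Higgins commutator obtained by deleting one of the two equal adjacent entries: H(K₁, …, Kₙ) ≤ H(K₁, …, Kᵢ, K_{i+2}, …, Kₙ). -/
import Mathlib


/-- The homomorphism on the free product `Monoid.CoprodI` of the subgroups `K i`
that is trivial on the `k`-th free factor and the canonical inclusion on every
other free factor. -/
def piHat {G : Type*} [Group G] {n : ℕ} (K : Fin n → Subgroup G) (k : Fin n) :
    Monoid.CoprodI (fun i => ↥(K i)) →* Monoid.CoprodI (fun i => ↥(K i)) :=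
  Monoid.CoprodI.lift
    (fun i => if i = k then 1 else Monoid.CoprodI.of (M := fun i => ↥(K i)) (i := i))

/-- The `n`-fold co-smash product `K₁ ◇ ⋯ ◇ Kₙ` of subgroups of `G`: the
intersection of the kernels of the homomorphisms `piHat K k`. -/
def cosmash {G : Type*} [Group G] {n : ℕ} (K : Fin n → Subgroup G) :
    Subgroup (Monoid.CoprodI (fun i => ↥(K i))) :=
  ⨅ k, (piHat K k).ker

/-- The `n`-fold Higgins commutator `H(K₁, …, Kₙ)` of subgroups of `G`: the image
of the co-smash product under the homomorphism induced by the subgroup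
inclusions. -/
def higgins {G : Type*} [Group G] {n : ℕ} (K : Fin n → Subgroup G) : Subgroup G :=
  (cosmash K).map (Monoid.CoprodI.lift (fun i => (K i).subtype))

-- Auxiliary `Fin` lemmas
lemma succAbove_succ_eq_castSucc {n : ℕ} (i k : Fin n) (hk : k ≠ i) :
    (i.succ).succAbove k = (i.castSucc).succAbove k := by
  have hv : (k : ℕ) ≠ (i : ℕ) := fun hEq => hk (Fin.val_injective hEq)
  unfold Fin.succAbove
  split_ifs with h1 h2 h2 <;>
    first
      | rfl
      | (exfalso
         simp only [Fin.lt_def, Fin.coe_castSucc, Fin.val_succ] at h1 h2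
         omega)

lemma predAbove_succAbove_succ {n : ℕ} (i k : Fin n) :
    i.predAbove ((i.succ).succAbove k) = k := by
  by_cases hk : k = i
  · subst hk; simp
  · rw [succAbove_succ_eq_castSucc i k hk, Fin.predAbove_succAbove]

/-- For `n + 1 ≥ 3` and subgroups `K₁, …, K_{n+1}` of `G` with two equal adjacent
entries `K i.castSucc = K i.succ`, the `(n+1)`-fold Higgins commutator is contained
in the `n`-fold Higgins commutator obtained by deleting one of the two equal
adjacent entries. -/
theorem higgins_le_higgins_removeNth {G : Type*} [Group G] {n : ℕ} (hn : 2 ≤ n)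
    (K : Fin (n + 1) → Subgroup G) (i : Fin n) (h : K i.castSucc = K i.succ) :
    higgins K ≤ higgins (Fin.removeNth i.succ K) := by
  classical
  set K' : Fin n → Subgroup G := Fin.removeNth i.succ K with hK'
  have hKeq : ∀ m : Fin (n + 1), K m ≤ K' (i.predAbove m) := by
    intro m
    by_cases hm : m = i.castSucc
    · subst hm
      simp only [Fin.predAbove_castSucc_self, hK', Fin.removeNth, Fin.succAbove_succ_self]
      exact le_rfl
    · by_cases hm' : m = i.succ
      · subst hm'
        simp only [Fin.predAbove_succ_self, hK', Fin.removeNth, Fin.succAbove_succ_self, ← h]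
        exact le_rfl
      · have hne : i.predAbove m ≠ i := by
          intro hEq
          rcases Fin.lt_or_lt_of_ne hm with hlt | hgt
          · have := Fin.succAbove_predAbove (p := i) (i := m) hm
            rw [hEq, Fin.succAbove_castSucc_self] at this
            exact hm' this.symm
          · have := Fin.succAbove_predAbove (p := i) (i := m) hm
            rw [hEq, Fin.succAbove_castSucc_self] at this
            exact hm' this.symm
        simp only [hK', Fin.removeNth]
        rw [succAbove_succ_eq_castSucc i _ hne, Fin.succAbove_predAbove hm]
  let φ : Monoid.CoprodI (fun m => ↥(K m)) →* Monoid.CoprodI (fun k => ↥(K' k)) :=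
    Monoid.CoprodI.lift (fun m =>
      (Monoid.CoprodI.of (M := fun k => ↥(K' k)) (i := i.predAbove m)).comp
        (Subgroup.inclusion (hKeq m)))
  have hcomm : ∀ k : Fin n, (piHat K' k).comp φ =
      ((piHat K' k).comp φ).comp (piHat K ((i.succ).succAbove k)) := by
    intro k
    apply Monoid.CoprodI.ext_hom
    intro m
    ext x
    by_cases hm : m = (i.succ).succAbove k
    · subst hm
      simp [piHat, φ, Monoid.CoprodI.lift_of, predAbove_succAbove_succ i k]
    · simp [piHat, φ, Monoid.CoprodI.lift_of, hm]
  rintro g ⟨x, hx, rfl⟩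
  have hφx : φ x ∈ cosmash K' := by
    rw [cosmash, Subgroup.mem_iInf]
    intro k
    rw [MonoidHom.mem_ker]
    have hxk : piHat K ((i.succ).succAbove k) x = 1 :=
      Subgroup.mem_iInf.mp hx ((i.succ).succAbove k)
    have hcf := DFunLike.congr_fun (hcomm k) x
    simp only [MonoidHom.comp_apply, hxk, map_one] at hcf
    exact hcf
  refine ⟨φ x, hφx, ?_⟩
  have hκ : (Monoid.CoprodI.lift (fun k => (K' k).subtype)).comp φ =
      Monoid.CoprodI.lift (fun m => (K m).subtype) := by
    apply Monoid.CoprodI.ext_hom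
    intro m
    ext x
    simp [φ, Monoid.CoprodI.lift_of]
  exact DFunLike.congr_fun hκ x
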